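/- In the monoid M₆⁽ᵏ⁾ = ⟨a,b | ab = bᵏ⟩ (k ≥ 1), every element is equal to a unique word of the form b^α a^β with α, β ≥ 0, and multiplication is given by (b^{α₁}a^{β₁})(b^{α₂}a^{β₂}) = b^{α₁+β₁(k-1)+α₂} a^{β₂} if α₂ ≠ 0, and b^{α₁} a^{β₁+β₂} if α₂ = 0. -/

import Mathlib

/-- The defining relation of `M₆⁽ᵏ⁾ = ⟨a, b | ab = bᵏ⟩`, with `a` encoded as `true`
and `b` as `false`. -/
def rel6 (k : ℕ) : FreeMonoid Bool → FreeMonoid Bool → Prop :=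
  fun u v => u = FreeMonoid.of true * FreeMonoid.of false ∧ v = FreeMonoid.of false ^ k

namespace M6kAux

structure NF (k : ℕ) where
  b : ℕ
  a : ℕ

theorem NF.ext' {k : ℕ} {p q : NF k} (h1 : p.b = q.b) (h2 : p.a = q.a) : p = q := by
  cases p; cases q; simp_all

instance (k : ℕ) : Mul (NF k) :=
  ⟨fun p q => if q.b = 0 then ⟨p.b, p.a + q.a⟩ else ⟨p.b + p.a * (k - 1) + q.b, q.a⟩⟩

theorem nf_mul_def {k : ℕ} (p q : NF k) :
    p * q = if q.b = 0 then (⟨p.b, p.a + q.a⟩ : NF k) else ⟨p.b + p.a * (k - 1) + q.b, q.a⟩ := rfl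

instance (k : ℕ) : One (NF k) := ⟨⟨0, 0⟩⟩

theorem nf_one_def {k : ℕ} : (1 : NF k) = ⟨0, 0⟩ := rfl

instance (k : ℕ) : Monoid (NF k) where
  mul_assoc p q r := by
    obtain ⟨pb, pa⟩ := p; obtain ⟨qb, qa⟩ := q; obtain ⟨rb, ra⟩ := r
    rcases Nat.eq_zero_or_pos rb with hr | hr <;> rcases Nat.eq_zero_or_pos qb with hq | hq <;>
      simp_all [nf_mul_def, Nat.pos_iff_ne_zero, Nat.add_eq_zero] <;> ring
  one_mul p := by
    obtain ⟨pb, pa⟩ := p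
    rcases Nat.eq_zero_or_pos pb with h | h <;> simp_all [nf_mul_def, nf_one_def]
  mul_one p := by simp [nf_mul_def, nf_one_def]

theorem pow_b {k : ℕ} (n : ℕ) : (⟨1, 0⟩ : NF k) ^ n = ⟨n, 0⟩ := by
  induction n with
  | zero => rfl
  | succ n ih =>
      rw [pow_succ, ih, nf_mul_def]
      rcases Nat.eq_zero_or_pos n with h | h <;> simp_all

theorem pow_a {k : ℕ} (n : ℕ) : (⟨0, 1⟩ : NF k) ^ n = ⟨0, n⟩ := by
  induction n with
  | zero => rfl
  | succ n ih => rw [pow_succ, ih, nf_mul_def]; simp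

/-- the generator map -/
def fgen (k : ℕ) : Bool → NF k := fun x => if x then ⟨0, 1⟩ else ⟨1, 0⟩

theorem fgen_rel (k : ℕ) (hk : 1 ≤ k) : ∀ u v, rel6 k u v →
    FreeMonoid.lift (fgen k) u = FreeMonoid.lift (fgen k) v := by
  rintro u v ⟨rfl, rfl⟩
  rw [map_mul, map_pow, FreeMonoid.lift_eval_of, FreeMonoid.lift_eval_of,
    show fgen k true = (⟨0, 1⟩ : NF k) from rfl, show fgen k false = (⟨1, 0⟩ : NF k) from rfl,
    pow_b, nf_mul_def, if_neg (by simp)]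
  exact NF.ext' (by simp; omega) rfl

/-- the characterizing homomorphism -/
noncomputable def φ (k : ℕ) (hk : 1 ≤ k) : PresentedMonoid (rel6 k) →* NF k :=
  PresentedMonoid.lift (fgen k) (fgen_rel k hk)

theorem φ_b (k : ℕ) (hk : 1 ≤ k) : φ k hk (PresentedMonoid.of (rel6 k) false) = ⟨1, 0⟩ := rfl

theorem φ_a (k : ℕ) (hk : 1 ≤ k) : φ k hk (PresentedMonoid.of (rel6 k) true) = ⟨0, 1⟩ := rfl

theorem φ_nf (k : ℕ) (hk : 1 ≤ k) (α β : ℕ) :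
    φ k hk (PresentedMonoid.of (rel6 k) false ^ α * PresentedMonoid.of (rel6 k) true ^ β)
      = ⟨α, β⟩ := by
  rw [map_mul, map_pow, map_pow, φ_b, φ_a, pow_b, pow_a, nf_mul_def]
  simp

theorem ab_rel (k : ℕ) :
    PresentedMonoid.of (rel6 k) true * PresentedMonoid.of (rel6 k) false
      = PresentedMonoid.of (rel6 k) false ^ k := by
  have h : PresentedMonoid.mk (rel6 k) (FreeMonoid.of true * FreeMonoid.of false)
      = PresentedMonoid.mk (rel6 k) (FreeMonoid.of false ^ k) :=
    Quotient.sound (ConGen.Rel.of _ _ ⟨rfl, rfl⟩)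
  simpa [map_mul, map_pow, PresentedMonoid.of] using h

theorem a_mul_b_pow (k : ℕ) (hk : 1 ≤ k) (n : ℕ) :
    PresentedMonoid.of (rel6 k) true * PresentedMonoid.of (rel6 k) false ^ (n + 1)
      = PresentedMonoid.of (rel6 k) false ^ (n + k) := by
  rw [pow_succ', ← mul_assoc, ab_rel, ← pow_add, Nat.add_comm]

theorem a_pow_mul_b_pow (k : ℕ) (hk : 1 ≤ k) (β : ℕ) : ∀ α : ℕ, α ≠ 0 →
    PresentedMonoid.of (rel6 k) true ^ β * PresentedMonoid.of (rel6 k) false ^ α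
      = PresentedMonoid.of (rel6 k) false ^ (α + β * (k - 1)) := by
  obtain ⟨j, rfl⟩ := Nat.exists_eq_add_of_le hk
  simp only [Nat.add_sub_cancel_left]
  induction β with
  | zero => intro α _; simp
  | succ β ih =>
      intro α hα
      obtain ⟨m, rfl⟩ := Nat.exists_eq_succ_of_ne_zero hα
      rw [pow_succ, mul_assoc, show m.succ = m + 1 from rfl, a_mul_b_pow (1 + j) hk m,
        ih (m + (1 + j)) (by omega)]
      congr 1
      ring

end M6kAux

/-- In `M₆⁽ᵏ⁾ = ⟨a, b | ab = bᵏ⟩` (`k ≥ 1`), every element is equal to a unique word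
`b^α a^β`, and multiplication is given by
`(b^{α₁}a^{β₁})(b^{α₂}a^{β₂}) = b^{α₁+β₁(k-1)+α₂} a^{β₂}` if `α₂ ≠ 0`, and
`b^{α₁} a^{β₁+β₂}` if `α₂ = 0`. -/
theorem M6k_normal_form (k : ℕ) (hk : 1 ≤ k) :
    (∀ x : PresentedMonoid (rel6 k), ∃! p : ℕ × ℕ,
        x = PresentedMonoid.of (rel6 k) false ^ p.1 *
          PresentedMonoid.of (rel6 k) true ^ p.2) ∧
      ∀ α₁ β₁ α₂ β₂ : ℕ,
        (α₂ ≠ 0 →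
          (PresentedMonoid.of (rel6 k) false ^ α₁ * PresentedMonoid.of (rel6 k) true ^ β₁) *
            (PresentedMonoid.of (rel6 k) false ^ α₂ * PresentedMonoid.of (rel6 k) true ^ β₂) =
          PresentedMonoid.of (rel6 k) false ^ (α₁ + β₁ * (k - 1) + α₂) *
            PresentedMonoid.of (rel6 k) true ^ β₂) ∧
        (α₂ = 0 →
          (PresentedMonoid.of (rel6 k) false ^ α₁ * PresentedMonoid.of (rel6 k) true ^ β₁) *
            (PresentedMonoid.of (rel6 k) false ^ α₂ * PresentedMonoid.of (rel6 k) true ^ β₂) =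
          PresentedMonoid.of (rel6 k) false ^ α₁ *
            PresentedMonoid.of (rel6 k) true ^ (β₁ + β₂)) := by
  constructor
  · -- normal form: existence and uniqueness
    intro x
    have hex : ∀ y : PresentedMonoid (rel6 k), ∃ p : ℕ × ℕ,
        y = PresentedMonoid.of (rel6 k) false ^ p.1 * PresentedMonoid.of (rel6 k) true ^ p.2 := by
      intro y
      induction y with
      | _ l =>
        induction l using FreeMonoid.inductionOn' with
        | one => exact ⟨(0, 0), by simp⟩
        | of_mul x xs ih =>
          obtain ⟨⟨α, β⟩, hp⟩ := ih
          rw [map_mul, hp]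
          cases x with
          | false =>
            refine ⟨(α + 1, β), ?_⟩
            show PresentedMonoid.of (rel6 k) false *
              (PresentedMonoid.of (rel6 k) false ^ α * _) = _
            rw [← mul_assoc, ← pow_succ']
          | true =>
            rcases Nat.eq_zero_or_pos α with h0 | h0
            · refine ⟨(0, β + 1), ?_⟩
              subst h0
              show PresentedMonoid.of (rel6 k) true *
                (PresentedMonoid.of (rel6 k) false ^ 0 * PresentedMonoid.of (rel6 k) true ^ β) = _
              simp [← pow_succ']
            · obtain ⟨m, rfl⟩ := Nat.exists_eq_succ_of_ne_zero (Nat.pos_iff_ne_zero.mp h0)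
              refine ⟨(m + k, β), ?_⟩
              show PresentedMonoid.of (rel6 k) true *
                (PresentedMonoid.of (rel6 k) false ^ (m + 1) * _) = _
              rw [← mul_assoc, M6kAux.a_mul_b_pow k hk m]
    obtain ⟨p, hp⟩ := hex x
    refine ⟨p, hp, ?_⟩
    rintro ⟨α, β⟩ hq
    have h1 := M6kAux.φ_nf k hk α β
    have h2 := M6kAux.φ_nf k hk p.1 p.2
    rw [← hq] at h1
    rw [← hp] at h2
    rw [h2] at h1
    have h3 : p.1 = α ∧ p.2 = β := by rwa [M6kAux.NF.mk.injEq] at h1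
    exact Prod.ext h3.1.symm h3.2.symm
  · -- multiplication formulas
    intro α₁ β₁ α₂ β₂
    constructor
    · intro hα₂
      rw [mul_assoc, ← mul_assoc (PresentedMonoid.of (rel6 k) true ^ β₁),
        M6kAux.a_pow_mul_b_pow k hk β₁ α₂ hα₂, ← mul_assoc, ← pow_add]
      congr 2
      omega
    · intro hα₂
      subst hα₂
      rw [pow_zero, one_mul, mul_assoc, ← pow_add]
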